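/- Let m ≥ 1, let t₀ < T₀ be reals, let f : [t₀,T₀] × ℂ^{2m} → ℂ^{2m} be continuous and satisfy ‖f(t,u) − f(t,v)‖ ≤ L‖u − v‖ for some L > 0 and all t ∈ [t₀,T₀], u, v ∈ ℂ^{2m}, and let z : [t₀,T₀] → ℂ^{2m} be continuously differentiable with z'(t) = f(t, z(t)) for all t. For N ≥ 1 set h = (T₀−t₀)/N and t_n = t₀ + nh. Then for every ε > 0 there exists N₀ such that for all N ≥ N₀ the following holds: every finite sequence z_0, …, z_N in ℂ^{2m}, written z_n = (x_n, y_n) with x_n, y_n ∈ ℂ^m, satisfying z_0 = z(t₀) and z_{n+1} = z_n + h·f(t_n, (x_{n+1}, y_n)) for 0 ≤ n ≤ N−1, satisfies max_{0 ≤ n ≤ N} ‖z(t_n) − z_n‖ ≤ ε. -/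

import Mathlib

open Matrix

/-- `glue u v` is the vector of `ℂ^{2m}` whose first half (the `x`-components) is taken
from `u` and whose second half (the `y`-components) is taken from `v`. -/
noncomputable def glue {m : ℕ} (u v : EuclideanSpace ℂ (Fin m ⊕ Fin m)) :
    EuclideanSpace ℂ (Fin m ⊕ Fin m) :=
  (EuclideanSpace.equiv (Fin m ⊕ Fin m) ℂ).symm
    (Sum.elim (fun a => u (Sum.inl a)) (fun a => v (Sum.inr a)))

lemma glue_self {m : ℕ} (u : EuclideanSpace ℂ (Fin m ⊕ Fin m)) : glue u u = u := by
  ext i; cases i <;> rfl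

lemma glue_sub {m : ℕ} (u v u' v' : EuclideanSpace ℂ (Fin m ⊕ Fin m)) :
    glue u v - glue u' v' = glue (u - u') (v - v') := by
  ext i; cases i <;> rfl

lemma norm_glue_le {m : ℕ} (u v : EuclideanSpace ℂ (Fin m ⊕ Fin m)) :
    ‖glue u v‖ ≤ ‖u‖ + ‖v‖ := by
  have hnn : (0:ℝ) ≤ ‖u‖ + ‖v‖ := by positivity
  refine le_of_pow_le_pow_left₀ two_ne_zero hnn ?_
  have h1 : ‖glue u v‖ ^ 2 = ∑ i : Fin m ⊕ Fin m, ‖(glue u v) i‖ ^ 2 := by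
    rw [EuclideanSpace.norm_eq, Real.sq_sqrt (by positivity)]
  have h2 : ‖u‖ ^ 2 = ∑ i : Fin m ⊕ Fin m, ‖u i‖ ^ 2 := by
    rw [EuclideanSpace.norm_eq, Real.sq_sqrt (by positivity)]
  have h3 : ‖v‖ ^ 2 = ∑ i : Fin m ⊕ Fin m, ‖v i‖ ^ 2 := by
    rw [EuclideanSpace.norm_eq, Real.sq_sqrt (by positivity)]
  have key : ‖glue u v‖ ^ 2 ≤ ‖u‖ ^ 2 + ‖v‖ ^ 2 := by
    rw [h1, h2, h3, Fintype.sum_sum_type, Fintype.sum_sum_type, Fintype.sum_sum_type]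
    have e1 : ∀ a : Fin m, ‖(glue u v) (Sum.inl a)‖ ^ 2 = ‖u (Sum.inl a)‖ ^ 2 := fun a => rfl
    have e2 : ∀ a : Fin m, ‖(glue u v) (Sum.inr a)‖ ^ 2 = ‖v (Sum.inr a)‖ ^ 2 := fun a => rfl
    simp only [e1, e2]
    have p1 : (0:ℝ) ≤ ∑ a : Fin m, ‖u (Sum.inr a)‖ ^ 2 := by positivity
    have p2 : (0:ℝ) ≤ ∑ a : Fin m, ‖v (Sum.inl a)‖ ^ 2 := by positivity
    linarith
  nlinarith [norm_nonneg u, norm_nonneg v]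

set_option maxHeartbeats 2000000 in
/-- error estimate for the semi-implicit Euler scheme
`z_{n+1} = z_n + h f(t_n, (x_{n+1}, y_n))` applied to a Lipschitz ODE `z' = f(t, z)`:
the nodal errors `‖z(t_n) − z_n‖` are uniformly `≤ ε` for `N` large enough. -/
theorem stmt12 (m : ℕ) (hm : 1 ≤ m) (t₀ T₀ : ℝ) (hT : t₀ < T₀)
    (f : ℝ → EuclideanSpace ℂ (Fin m ⊕ Fin m) → EuclideanSpace ℂ (Fin m ⊕ Fin m))
    (hfcont : ContinuousOn (fun p : ℝ × EuclideanSpace ℂ (Fin m ⊕ Fin m) => f p.1 p.2)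
      (Set.Icc t₀ T₀ ×ˢ Set.univ))
    (L : ℝ) (hL : 0 < L)
    (hlip : ∀ t ∈ Set.Icc t₀ T₀, ∀ u v : EuclideanSpace ℂ (Fin m ⊕ Fin m),
      ‖f t u - f t v‖ ≤ L * ‖u - v‖)
    (z : ℝ → EuclideanSpace ℂ (Fin m ⊕ Fin m))
    (hz : ∀ t ∈ Set.Icc t₀ T₀, HasDerivAt z (f t (z t)) t) :
    ∀ ε > (0 : ℝ), ∃ N₀ : ℕ, ∀ N : ℕ, N₀ ≤ N → 1 ≤ N →
      ∀ zs : ℕ → EuclideanSpace ℂ (Fin m ⊕ Fin m),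
        zs 0 = z t₀ →
        (∀ n : ℕ, n < N →
          zs (n + 1) = zs n + (((T₀ - t₀) / N : ℝ) : ℂ) •
            f (t₀ + (n : ℝ) * ((T₀ - t₀) / N)) (glue (zs (n + 1)) (zs n))) →
        ∀ n : ℕ, n ≤ N → ‖z (t₀ + (n : ℝ) * ((T₀ - t₀) / N)) - zs n‖ ≤ ε := by
  intro ε hε
  have hD : 0 < T₀ - t₀ := sub_pos.2 hT
  have hzc : ContinuousOn z (Set.Icc t₀ T₀) :=
    fun t ht => (hz t ht).continuousAt.continuousWithinAt
  have hφc : ContinuousOn (fun t => f t (z t)) (Set.Icc t₀ T₀) := by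
    have : ContinuousOn (fun t : ℝ => ((t, z t) : ℝ × EuclideanSpace ℂ (Fin m ⊕ Fin m)))
        (Set.Icc t₀ T₀) := (continuousOn_id).prodMk hzc
    exact hfcont.comp this (fun t ht => ⟨ht, Set.mem_univ _⟩)
  obtain ⟨M, hM⟩ := (isCompact_Icc (a := t₀) (b := T₀)).exists_bound_of_continuousOn hφc
  have hM0 : 0 ≤ M := le_trans (norm_nonneg _) (hM t₀ (Set.left_mem_Icc.2 hT.le))
  obtain ⟨ε', hε', hε'eq⟩ : ∃ e : ℝ, 0 < e ∧
      4 * (T₀ - t₀) * e * Real.exp (4 * L * (T₀ - t₀)) = ε := by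
    refine ⟨ε / (4 * (T₀ - t₀) * Real.exp (4 * L * (T₀ - t₀))), by positivity, ?_⟩
    field_simp
  have huc := (isCompact_Icc (a := t₀) (b := T₀)).uniformContinuousOn_of_continuous hφc
  rw [Metric.uniformContinuousOn_iff] at huc
  obtain ⟨δ, hδ, hucδ⟩ := huc ε' hε'
  obtain ⟨N₀, hN₀⟩ := exists_nat_gt
    ((T₀ - t₀) / δ + 2 * L * (T₀ - t₀) + L * M * (T₀ - t₀) / ε')
  refine ⟨N₀, fun N hNN₀ hN1 zs hzs0 hrec n hnN => ?_⟩
  set h : ℝ := (T₀ - t₀) / N with hhdef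
  have hNpos : (0:ℝ) < N := by exact_mod_cast Nat.pos_of_ne_zero (by omega)
  have hh : 0 < h := by rw [hhdef]; exact div_pos hD hNpos
  have hNh : (N:ℝ) * h = T₀ - t₀ := by rw [hhdef]; field_simp
  clear_value h
  have hNbig : (T₀ - t₀) / δ + 2 * L * (T₀ - t₀) + L * M * (T₀ - t₀) / ε' < (N:ℝ) :=
    hN₀.trans_le (by exact_mod_cast hNN₀)
  have p1 : 0 ≤ (T₀ - t₀) / δ := by positivity
  have p2 : 0 ≤ 2 * L * (T₀ - t₀) := by positivity
  have p3 : 0 ≤ L * M * (T₀ - t₀) / ε' := by positivity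
  have hhδ : h < δ := by
    have h1 : (T₀ - t₀) / δ < (N:ℝ) := by linarith
    rw [div_lt_iff₀ hδ] at h1
    nlinarith
  have hx2 : h * L ≤ 1 / 2 := by
    have h1 : 2 * L * (T₀ - t₀) < (N:ℝ) := by linarith
    nlinarith
  have hxM : h * L * M ≤ ε' := by
    have h1 : L * M * (T₀ - t₀) / ε' < (N:ℝ) := by linarith
    rw [div_lt_iff₀ hε'] at h1
    nlinarith
  have hxnn : 0 ≤ h * L := by positivity
  -- node membership
  have tmem : ∀ k : ℕ, k ≤ N → t₀ + (k:ℝ) * h ∈ Set.Icc t₀ T₀ := by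
    intro k hk
    constructor
    · nlinarith [(Nat.cast_nonneg k : (0:ℝ) ≤ (k:ℝ))]
    · have h1 : (k:ℝ) * h ≤ (N:ℝ) * h :=
        mul_le_mul_of_nonneg_right (by exact_mod_cast hk) hh.le
      rw [hNh] at h1; linarith
  -- one-step estimate
  have step : ∀ k : ℕ, k < N →
      ‖z (t₀ + ((k:ℝ)+1) * h) - zs (k+1)‖ ≤
        (1 + 4 * (h * L)) * ‖z (t₀ + (k:ℝ) * h) - zs k‖ + 4 * (h * ε') := by
    intro k hk
    have hrk0 := hrec k hk
    set a : ℝ := t₀ + (k:ℝ) * h with hadef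
    have hb : t₀ + ((k:ℝ)+1) * h = a + h := by rw [hadef]; ring
    rw [hb]
    have hamem : a ∈ Set.Icc t₀ T₀ := tmem k hk.le
    have hbmem : a + h ∈ Set.Icc t₀ T₀ := by
      rw [← hb]
      have := tmem (k+1) hk
      push_cast at this ⊢
      exact this
    clear_value a
    have hsub : Set.Icc a (a + h) ⊆ Set.Icc t₀ T₀ := Set.Icc_subset_Icc hamem.1 hbmem.2
    set c := f a (z a) with hcdef
    set w := glue (zs (k + 1)) (zs k) with hwdef
    set E0 : ℝ := ‖z a - zs k‖ with hE0def
    set E1 : ℝ := ‖z (a + h) - zs (k+1)‖ with hE1def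
    clear_value c w E0 E1
    have hE0nn : 0 ≤ E0 := hE0def ▸ norm_nonneg _
    have hE1nn : 0 ≤ E1 := hE1def ▸ norm_nonneg _
    -- truncation error
    have trunc : ‖z (a + h) - z a - h • c‖ ≤ ε' * h := by
      have hd : ∀ s ∈ Set.Icc a (a + h),
          HasDerivWithinAt (fun s => z s - s • c) (f s (z s) - c) (Set.Icc a (a + h)) s := by
        intro s hs
        have h1 := (hz s (hsub hs)).sub ((hasDerivAt_id s).smul_const c)
        rw [one_smul] at h1
        exact h1.hasDerivWithinAt
      have hbound : ∀ s ∈ Set.Icc a (a + h), ‖f s (z s) - c‖ ≤ ε' := by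
        intro s hs
        have hdist : dist s a < δ := by
          rw [Real.dist_eq, abs_of_nonneg (by linarith [hs.1])]
          linarith [hs.2]
        have h2 := hucδ s (hsub hs) a hamem hdist
        rw [dist_eq_norm] at h2
        rw [hcdef]
        exact h2.le
      have h3 := (convex_Icc a (a + h)).norm_image_sub_le_of_norm_hasDerivWithin_le hd hbound
        (Set.left_mem_Icc.2 (by linarith)) (Set.right_mem_Icc.2 (by linarith))
      calc ‖z (a + h) - z a - h • c‖ = ‖(z (a+h) - (a+h) • c) - (z a - a • c)‖ := by
            congr 1
            have h4 : (a + h) • c - a • c = h • c := by rw [← sub_smul]; congr 1; ring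
            rw [← h4]; abel
        _ ≤ ε' * ‖a + h - a‖ := h3
        _ = ε' * h := by rw [show a + h - a = h by ring, Real.norm_eq_abs, abs_of_pos hh]
    -- solution increment bound
    have zinc : ‖z (a + h) - z a‖ ≤ M * h := by
      have hd : ∀ s ∈ Set.Icc a (a + h),
          HasDerivWithinAt z (f s (z s)) (Set.Icc a (a + h)) s := fun s hs =>
        (hz s (hsub hs)).hasDerivWithinAt
      have hbound : ∀ s ∈ Set.Icc a (a + h), ‖f s (z s)‖ ≤ M := fun s hs => hM s (hsub hs)
      have h3 := (convex_Icc a (a + h)).norm_image_sub_le_of_norm_hasDerivWithin_le hd hbound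
        (Set.left_mem_Icc.2 (by linarith)) (Set.right_mem_Icc.2 (by linarith))
      calc ‖z (a + h) - z a‖ ≤ M * ‖a + h - a‖ := h3
        _ = M * h := by rw [show a + h - a = h by ring, Real.norm_eq_abs, abs_of_pos hh]
    -- the scheme step
    have hrk : zs (k + 1) = zs k + h • f a w := by
      rw [hrk0, Complex.coe_smul]
    -- error decomposition
    have hdecomp : z (a + h) - zs (k + 1) =
        (z a - zs k) + h • (c - f a w) + (z (a + h) - z a - h • c) := by
      rw [hrk, smul_sub]; abel
    -- glue distance
    have hglue : ‖z a - w‖ ≤ M * h + E1 + E0 := by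
      have e1 : z a - w = glue (z a - zs (k+1)) (z a - zs k) := by
        rw [hwdef, ← glue_sub, glue_self]
      rw [e1]
      have e2 := norm_glue_le (z a - zs (k+1)) (z a - zs k)
      have e3 : ‖z a - zs (k+1)‖ ≤ ‖z (a+h) - zs (k+1)‖ + ‖z (a+h) - z a‖ := by
        have e4 : z a - zs (k+1) = (z (a+h) - zs (k+1)) - (z (a+h) - z a) := by abel
        rw [e4]; exact norm_sub_le _ _
      rw [hE1def, hE0def]
      linarith [e2, e3, zinc]
    -- Lipschitz
    have hlipk : ‖c - f a w‖ ≤ L * ‖z a - w‖ := by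
      rw [hcdef]; exact hlip a hamem (z a) w
    -- combine
    have hcomb : E1 ≤ E0 + h * L * (M * h + E1 + E0) + ε' * h := by
      have n1 : ‖(z a - zs k) + h • (c - f a w) + (z (a + h) - z a - h • c)‖ ≤
          ‖z a - zs k‖ + ‖h • (c - f a w)‖ + ‖z (a + h) - z a - h • c‖ :=
        (norm_add_le _ _).trans (by gcongr; exact norm_add_le _ _)
      have n2 : ‖h • (c - f a w)‖ = h * ‖c - f a w‖ := by
        rw [norm_smul, Real.norm_eq_abs, abs_of_pos hh]
      have n3 : ‖c - f a w‖ ≤ L * (M * h + E1 + E0) :=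
        hlipk.trans (mul_le_mul_of_nonneg_left hglue hL.le)
      have n4 : ‖z a - zs k‖ = E0 := hE0def.symm
      have n5 : E1 ≤ ‖z a - zs k‖ + ‖h • (c - f a w)‖ + ‖z (a + h) - z a - h • c‖ := by
        rw [hE1def, hdecomp]; exact n1
      nlinarith [trunc, hh.le]
    have H2 : (1 - h * L) * E1 ≤ (1 + h * L) * E0 + 2 * (h * ε') := by
      have h5 : h * (h * L * M) ≤ h * ε' := mul_le_mul_of_nonneg_left hxM hh.le
      nlinarith
    nlinarith [mul_nonneg hE0nn (by linarith : (0:ℝ) ≤ 1 - 2 * (h * L)),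
      mul_nonneg (mul_nonneg hh.le hε'.le) (by linarith : (0:ℝ) ≤ 1 - 2 * (h * L))]
  -- discrete Gronwall by induction
  have main : ∀ k : ℕ, k ≤ N →
      ‖z (t₀ + (k:ℝ) * h) - zs k‖ ≤ 4 * (h * ε') * k * (1 + 4 * (h * L)) ^ k := by
    intro k
    induction k with
    | zero =>
      intro _
      simp only [Nat.cast_zero, zero_mul, add_zero, mul_zero, pow_zero]
      rw [hzs0, sub_self, norm_zero]
    | succ k ih =>
      intro hk1
      have hkN : k < N := hk1
      have ihk := ih hkN.le
      have hstep := step k hkN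
      have hbase : (1:ℝ) ≤ 1 + 4 * (h * L) := by linarith
      have hpow1 : (1:ℝ) ≤ (1 + 4 * (h * L)) ^ k * (1 + 4 * (h * L)) := by
        rw [← pow_succ]; exact one_le_pow₀ hbase
      have hQ : (0:ℝ) ≤ 4 * (h * ε') := by positivity
      push_cast
      calc ‖z (t₀ + ((k:ℝ) + 1) * h) - zs (k + 1)‖
          ≤ (1 + 4 * (h * L)) * ‖z (t₀ + (k:ℝ) * h) - zs k‖ + 4 * (h * ε') := hstep
        _ ≤ (1 + 4 * (h * L)) * (4 * (h * ε') * k * (1 + 4 * (h * L)) ^ k) + 4 * (h * ε') := by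
            have := mul_le_mul_of_nonneg_left ihk (by linarith : (0:ℝ) ≤ 1 + 4 * (h * L))
            linarith
        _ ≤ 4 * (h * ε') * ((k:ℝ) + 1) * (1 + 4 * (h * L)) ^ (k + 1) := by
            rw [pow_succ]
            nlinarith [mul_nonneg hQ (sub_nonneg.2 hpow1),
              mul_nonneg (mul_nonneg hQ (Nat.cast_nonneg k : (0:ℝ) ≤ (k:ℝ)))
                (sub_nonneg.2 hpow1)]
  -- final estimate
  have hbase : (1:ℝ) ≤ 1 + 4 * (h * L) := by linarith
  have hfin : 4 * (h * ε') * (N:ℝ) * (1 + 4 * (h * L)) ^ N ≤ ε := by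
    have hB : (1 + 4 * (h * L)) ^ N ≤ Real.exp (4 * L * (T₀ - t₀)) := by
      have h1 : (1 + 4 * (h * L)) ≤ Real.exp (4 * (h * L)) := by
        linarith [Real.add_one_le_exp (4 * (h * L))]
      have h2 : (1 + 4 * (h * L)) ^ N ≤ (Real.exp (4 * (h * L))) ^ N :=
        pow_le_pow_left₀ (by linarith) h1 N
      rwa [← Real.exp_nat_mul, show (N:ℝ) * (4 * (h * L)) = 4 * L * (T₀ - t₀) by
        rw [← hNh]; ring] at h2
    calc 4 * (h * ε') * (N:ℝ) * (1 + 4 * (h * L)) ^ N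
        ≤ 4 * (h * ε') * (N:ℝ) * Real.exp (4 * L * (T₀ - t₀)) := by
          apply mul_le_mul_of_nonneg_left hB (by positivity)
      _ = 4 * (T₀ - t₀) * ε' * Real.exp (4 * L * (T₀ - t₀)) := by rw [← hNh]; ring
      _ = ε := hε'eq
  have mono : 4 * (h * ε') * (n:ℝ) * (1 + 4 * (h * L)) ^ n ≤
      4 * (h * ε') * (N:ℝ) * (1 + 4 * (h * L)) ^ N := by
    have m1 : ((n:ℝ)) ≤ (N:ℝ) := by exact_mod_cast hnN
    have m2 : (1 + 4 * (h * L)) ^ n ≤ (1 + 4 * (h * L)) ^ N := pow_le_pow_right₀ hbase hnN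
    have hQ : (0:ℝ) ≤ 4 * (h * ε') := by positivity
    exact mul_le_mul (mul_le_mul_of_nonneg_left m1 hQ) m2
      (pow_nonneg (by linarith) n) (by positivity)
  exact (main n hnN).trans (mono.trans hfin)
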